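/- For ω > 0 and 0 ≤ ι < 1, the derivative of relu_ω(t) = ω * log(exp(ι t / ω) + exp(t / ω)) at any real t equals ι + (1 - ι) * sigm((1 - ι) t / ω), where sigm(s) = 1/(1 + exp(-s)). -/
import Mathlib


noncomputable def sigm (t : ℝ) : ℝ := 1 / (1 + Real.exp (-t))

noncomputable def reluSmooth (ι ω t : ℝ) : ℝ :=
  ω * Real.log (Real.exp (ι * t / ω) + Real.exp (t / ω))

theorem deriv_reluSmooth (ι ω t : ℝ) (hω : 0 < ω) (hι0 : 0 ≤ ι) (hι1 : ι < 1) :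
    HasDerivAt (reluSmooth ι ω) (ι + (1 - ι) * sigm ((1 - ι) * t / ω)) t := by
  have hω' : ω ≠ 0 := ne_of_gt hω
  have h1 : HasDerivAt (fun x : ℝ => ι * x / ω) (ι / ω) t := by
    simpa using ((hasDerivAt_id t).const_mul ι).div_const ω
  have h2 : HasDerivAt (fun x : ℝ => x / ω) (1 / ω) t := (hasDerivAt_id t).div_const ω
  have hsum : Real.exp (ι * t / ω) + Real.exp (t / ω) ≠ 0 := by positivity
  have hd : HasDerivAt (reluSmooth ι ω)
      (ω * ((Real.exp (ι * t / ω) * (ι / ω) + Real.exp (t / ω) * (1 / ω)) /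
        (Real.exp (ι * t / ω) + Real.exp (t / ω)))) t :=
    ((h1.exp.add h2.exp).log hsum).const_mul ω
  have key : ω * ((Real.exp (ι * t / ω) * (ι / ω) + Real.exp (t / ω) * (1 / ω)) /
        (Real.exp (ι * t / ω) + Real.exp (t / ω)))
      = ι + (1 - ι) * sigm ((1 - ι) * t / ω) := by
    unfold sigm
    have he : -((1 - ι) * t / ω) = ι * t / ω - t / ω := by ring
    rw [he, Real.exp_sub]
    have hb : Real.exp (t / ω) ≠ 0 := Real.exp_ne_zero _
    have hpos : 1 + Real.exp (ι * t / ω) / Real.exp (t / ω) ≠ 0 := by positivity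
    field_simp
    ring
  rw [← key]
  exact hd
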